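/- arXiv:1807.10338 — 4 statements merged into one kernel-verified Lean document; each statement's English description precedes it below -/
import Mathlib

section
/- For all a, b > 0, the expectation of log Y under the Beta(a,b) distribution equals ψ(a) − ψ(a+b): ∫₀¹ (log y) · f_{a,b}(y) dy = ψ(a) − ψ(a+b). -/
open MeasureTheory Real Set

/-- The digamma function ψ(x) = Γ'(x)/Γ(x). -/
noncomputable def digamma (x : ℝ) : ℝ := deriv Real.Gamma x / Real.Gamma x

/-- The Beta(a,b) density f_{a,b}(y) = y^{a−1}(1−y)^{b−1}/B(a,b),
with B(a,b) = Γ(a)Γ(b)/Γ(a+b). -/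
noncomputable def betaDensity (a b y : ℝ) : ℝ :=
  y ^ (a - 1) * (1 - y) ^ (b - 1) / (Real.Gamma a * Real.Gamma b / Real.Gamma (a + b))

-- continuity of beta integrand on Ioo
lemma contOn_beta (s r : ℝ) :
    ContinuousOn (fun y : ℝ => y ^ (s - 1) * (1 - y) ^ (r - 1)) (Ioo 0 1) := by
  intro y hy
  apply ContinuousAt.continuousWithinAt
  exact (Real.continuousAt_rpow_const y _ (Or.inl hy.1.ne')).mul
    ((Real.continuousAt_rpow_const (1 - y) _ (Or.inl (ne_of_gt (by linarith [hy.2] : (0:ℝ) < 1 - y)))).comp ((continuous_const.sub continuous_id).continuousAt))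

lemma contOn_log_beta (s r : ℝ) :
    ContinuousOn (fun y : ℝ => Real.log y * (y ^ (s - 1) * (1 - y) ^ (r - 1))) (Ioo 0 1) := by
  intro y hy
  apply ContinuousAt.continuousWithinAt
  exact (Real.continuousAt_log hy.1.ne').mul (contOn_beta s r y hy |>.continuousAt
    (Ioo_mem_nhds hy.1 hy.2))

-- complex integrand equals ofReal of real integrand on Ioo 0 1
lemma cplx_eq (s r : ℝ) {y : ℝ} (hy : y ∈ Ioo (0:ℝ) 1) :
    (y : ℂ) ^ ((s:ℂ) - 1) * (1 - (y:ℂ)) ^ ((r:ℂ) - 1)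
      = ((y ^ (s - 1) * (1 - y) ^ (r - 1) : ℝ) : ℂ) := by
  obtain ⟨h0, h1⟩ := hy
  push_cast
  rw [Complex.ofReal_cpow h0.le, Complex.ofReal_cpow (by linarith : (0:ℝ) ≤ 1 - y)]
  push_cast
  ring

lemma betaIntegrand_integrableOn {s r : ℝ} (hs : 0 < s) (hr : 0 < r) :
    IntegrableOn (fun y : ℝ => y ^ (s - 1) * (1 - y) ^ (r - 1)) (Ioo 0 1) := by
  have hc : IntervalIntegrable
      (fun x : ℝ => (x:ℂ) ^ ((s:ℂ) - 1) * (1 - (x:ℂ)) ^ ((r:ℂ) - 1)) volume 0 1 :=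
    Complex.betaIntegral_convergent (by simpa using hs) (by simpa using hr)
  have hIoo : IntegrableOn
      (fun x : ℝ => (x:ℂ) ^ ((s:ℂ) - 1) * (1 - (x:ℂ)) ^ ((r:ℂ) - 1)) (Ioo 0 1) := by
    have := (intervalIntegrable_iff_integrableOn_Ioc_of_le (by norm_num : (0:ℝ) ≤ 1)).mp hc
    exact this.mono_set Ioo_subset_Ioc_self
  have hIoo2 : IntegrableOn
      (fun x : ℝ => ((x ^ (s - 1) * (1 - x) ^ (r - 1) : ℝ) : ℂ)) (Ioo 0 1) :=
    hIoo.congr ((ae_restrict_iff' measurableSet_Ioo).mpr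
      (Filter.Eventually.of_forall fun x hx => cplx_eq s r hx))
  have := hIoo2.re
  have h2 : Integrable (fun x : ℝ => x ^ (s - 1) * (1 - x) ^ (r - 1)) (volume.restrict (Ioo 0 1)) := by
    simpa using this
  exact h2

lemma betaIntegral_real {s r : ℝ} (hs : 0 < s) (hr : 0 < r) :
    ∫ y in Ioo (0:ℝ) 1, y ^ (s - 1) * (1 - y) ^ (r - 1)
      = Real.Gamma s * Real.Gamma r / Real.Gamma (s + r) := by
  have key := Complex.Gamma_mul_Gamma_eq_betaIntegral
    (s := (s:ℂ)) (t := (r:ℂ)) (by simpa using hs) (by simpa using hr)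
  have hbeta : Complex.betaIntegral (s:ℂ) (r:ℂ)
      = ((∫ y in Ioo (0:ℝ) 1, y ^ (s - 1) * (1 - y) ^ (r - 1) : ℝ) : ℂ) := by
    rw [Complex.betaIntegral, intervalIntegral.integral_of_le (by norm_num : (0:ℝ) ≤ 1),
      integral_Ioc_eq_integral_Ioo]
    rw [setIntegral_congr_fun measurableSet_Ioo (fun x hx => cplx_eq s r hx)]
    exact integral_ofReal
  rw [hbeta, ← Complex.ofReal_add, Complex.Gamma_ofReal, Complex.Gamma_ofReal,
    Complex.Gamma_ofReal, ← Complex.ofReal_mul, ← Complex.ofReal_mul] at key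
  have key' := Complex.ofReal_injective key
  have hne : Real.Gamma (s + r) ≠ 0 := (Real.Gamma_pos_of_pos (by linarith)).ne'
  field_simp
  linarith [key']

-- |log y| ≤ δ⁻¹ * y^(-δ) for y ∈ (0,1), δ > 0
lemma abs_log_le {y δ : ℝ} (hy : y ∈ Ioo (0:ℝ) 1) (hδ : 0 < δ) :
    |Real.log y| ≤ δ⁻¹ * y ^ (-δ) := by
  obtain ⟨h0, h1⟩ := hy
  have hlog : Real.log y < 0 := Real.log_neg h0 h1
  rw [abs_of_neg hlog]
  have h2 : Real.log (y ^ (-δ)) ≤ y ^ (-δ) - 1 :=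
    Real.log_le_sub_one_of_pos (Real.rpow_pos_of_pos h0 _)
  rw [Real.log_rpow h0] at h2
  have : -δ * Real.log y ≤ y ^ (-δ) := by linarith [Real.rpow_pos_of_pos h0 (-δ)]
  have h3 : δ * (-Real.log y) ≤ y ^ (-δ) := by linarith
  calc -Real.log y = δ⁻¹ * (δ * (-Real.log y)) := by rw [inv_mul_cancel_left₀ hδ.ne']
    _ ≤ δ⁻¹ * y ^ (-δ) := by
        exact mul_le_mul_of_nonneg_left h3 (inv_nonneg.mpr hδ.le)

lemma log_betaIntegrand_integrableOn {s r : ℝ} (hs : 0 < s) (hr : 0 < r) :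
    IntegrableOn (fun y : ℝ => Real.log y * (y ^ (s - 1) * (1 - y) ^ (r - 1))) (Ioo 0 1) := by
  have hbound : IntegrableOn
      (fun y : ℝ => (s/2)⁻¹ * (y ^ (s/2 - 1) * (1 - y) ^ (r - 1))) (Ioo 0 1) :=
    (betaIntegrand_integrableOn (by linarith) hr).const_mul _
  refine hbound.integrable.mono'
    ((contOn_log_beta s r).aestronglyMeasurable measurableSet_Ioo) ?_
  refine (ae_restrict_iff' measurableSet_Ioo).mpr (Filter.Eventually.of_forall fun y hy => ?_)
  obtain ⟨h0, h1⟩ := hy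
  have hy' : y ∈ Ioo (0:ℝ) 1 := ⟨h0, h1⟩
  have hb1 : (1 - y) ^ (r - 1) ≥ 0 := (Real.rpow_pos_of_pos (by linarith) _).le
  rw [Real.norm_eq_abs, abs_mul, abs_mul, abs_of_nonneg (Real.rpow_pos_of_pos h0 _).le,
    abs_of_nonneg hb1]
  have key : |Real.log y| * y ^ (s - 1) ≤ (s/2)⁻¹ * y ^ (s/2 - 1) := by
    calc |Real.log y| * y ^ (s - 1) ≤ ((s/2)⁻¹ * y ^ (-(s/2))) * y ^ (s - 1) := by
          exact mul_le_mul_of_nonneg_right (abs_log_le hy' (by linarith))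
            (Real.rpow_pos_of_pos h0 _).le
      _ = (s/2)⁻¹ * y ^ (s/2 - 1) := by
          rw [mul_assoc, ← Real.rpow_add h0]; ring_nf
  calc |Real.log y| * (y ^ (s - 1) * (1 - y) ^ (r - 1))
      = (|Real.log y| * y ^ (s - 1)) * (1 - y) ^ (r - 1) := by ring
    _ ≤ ((s/2)⁻¹ * y ^ (s/2 - 1)) * (1 - y) ^ (r - 1) :=
        mul_le_mul_of_nonneg_right key hb1
    _ = (s/2)⁻¹ * (y ^ (s/2 - 1) * (1 - y) ^ (r - 1)) := by ring

lemma hasDerivAt_F {a b : ℝ} (ha : 0 < a) (hb : 0 < b) :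
    HasDerivAt (fun t => ∫ y in Ioo (0:ℝ) 1, y ^ (t - 1) * (1 - y) ^ (b - 1))
      (∫ y in Ioo (0:ℝ) 1, Real.log y * (y ^ (a - 1) * (1 - y) ^ (b - 1))) a := by
  have ε_pos : (0:ℝ) < a/2 := by linarith
  have h := hasDerivAt_integral_of_dominated_loc_of_deriv_le
    (μ := volume.restrict (Ioo (0:ℝ) 1)) (x₀ := a) (s := Metric.ball a (a/2))
    (F := fun t (y : ℝ) => y ^ (t - 1) * (1 - y) ^ (b - 1))
    (F' := fun t (y : ℝ) => Real.log y * (y ^ (t - 1) * (1 - y) ^ (b - 1)))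
    (bound := fun y => (a/4)⁻¹ * (y ^ (a/4 - 1) * (1 - y) ^ (b - 1)))
    (Metric.ball_mem_nhds a ε_pos)
    (Filter.Eventually.of_forall fun t =>
      (contOn_beta t b).aestronglyMeasurable measurableSet_Ioo)
    (betaIntegrand_integrableOn ha hb)
    ((contOn_log_beta a b).aestronglyMeasurable measurableSet_Ioo)
    ?_ ((betaIntegrand_integrableOn (by linarith : (0:ℝ) < a/4) hb).const_mul _) ?_
  · exact h.2
  · refine (ae_restrict_iff' measurableSet_Ioo).mpr
      (Filter.Eventually.of_forall fun y hy => fun t ht => ?_)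
    obtain ⟨h0, h1⟩ := hy
    have hb1 : (0:ℝ) < (1 - y) ^ (b - 1) := Real.rpow_pos_of_pos (by linarith) _
    have htgt : a/2 - 1 ≤ t - 1 := by
      have := Metric.mem_ball.mp ht
      rw [Real.dist_eq, abs_lt] at this
      linarith [this.1]
    have hyt : y ^ (t - 1) ≤ y ^ (a/2 - 1) :=
      Real.rpow_le_rpow_of_exponent_ge h0 h1.le htgt
    have hlog : |Real.log y| ≤ (a/4)⁻¹ * y ^ (-(a/4)) := abs_log_le ⟨h0, h1⟩ (by linarith)
    rw [Real.norm_eq_abs, abs_mul, abs_mul, abs_of_nonneg (Real.rpow_pos_of_pos h0 _).le,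
      abs_of_nonneg hb1.le]
    calc |Real.log y| * (y ^ (t - 1) * (1 - y) ^ (b - 1))
        ≤ ((a/4)⁻¹ * y ^ (-(a/4))) * (y ^ (a/2 - 1) * (1 - y) ^ (b - 1)) := by
          apply mul_le_mul hlog _ (by positivity) (by positivity)
          exact mul_le_mul_of_nonneg_right hyt hb1.le
      _ = (a/4)⁻¹ * (y ^ (a/4 - 1) * (1 - y) ^ (b - 1)) := by
          rw [mul_assoc, ← mul_assoc (y ^ (-(a/4))), ← Real.rpow_add h0]
          ring_nf
  · refine (ae_restrict_iff' measurableSet_Ioo).mpr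
      (Filter.Eventually.of_forall fun y hy => fun t _ => ?_)
    obtain ⟨h0, _⟩ := hy
    have hder : HasDerivAt (fun t : ℝ => y ^ (t - 1)) (y ^ (t - 1) * Real.log y) t := by
      have h := ((Real.hasStrictDerivAt_const_rpow h0 (t - 1)).hasDerivAt.comp t
        ((hasDerivAt_id t).sub_const 1))
      simpa [Function.comp_def] using h
    have := hder.mul_const ((1 - y) ^ (b - 1))
    convert this using 1
    · rfl
    ring

lemma hasDerivAt_G {a b : ℝ} (ha : 0 < a) (hb : 0 < b) :
    HasDerivAt (fun t => Real.Gamma t * Real.Gamma b / Real.Gamma (t + b))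
      ((deriv Real.Gamma a * Real.Gamma b * Real.Gamma (a + b)
        - Real.Gamma a * Real.Gamma b * deriv Real.Gamma (a + b)) / Real.Gamma (a + b) ^ 2)
      a := by
  have hdiff : ∀ x : ℝ, 0 < x → DifferentiableAt ℝ Real.Gamma x := fun x hx =>
    Real.differentiableAt_Gamma (fun m => by
      intro h; rw [h] at hx; have := Nat.cast_nonneg (α := ℝ) m; linarith)
  have h1 : HasDerivAt Real.Gamma (deriv Real.Gamma a) a := (hdiff a ha).hasDerivAt
  have h2 : HasDerivAt (fun t => Real.Gamma (t + b)) (deriv Real.Gamma (a + b)) a := by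
    have := ((hdiff (a + b) (by linarith)).hasDerivAt).comp a ((hasDerivAt_id a).add_const b)
    simpa [Function.comp_def] using this
  have hne : Real.Gamma (a + b) ≠ 0 := (Real.Gamma_pos_of_pos (by linarith)).ne'
  exact (h1.mul_const (Real.Gamma b)).div h2 hne

/-- E[log Y] under Beta(a,b) equals ψ(a) − ψ(a+b). -/
theorem beta_mean_log (a b : ℝ) (ha : 0 < a) (hb : 0 < b) :
    ∫ y in Set.Ioo (0:ℝ) 1, Real.log y * betaDensity a b y
      = digamma a - digamma (a + b) := by
  have hΓa : 0 < Real.Gamma a := Real.Gamma_pos_of_pos ha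
  have hΓb : 0 < Real.Gamma b := Real.Gamma_pos_of_pos hb
  have hΓab : 0 < Real.Gamma (a + b) := Real.Gamma_pos_of_pos (by linarith)
  have hF := hasDerivAt_F ha hb
  have hG := hasDerivAt_G ha hb
  have heq : (fun t => ∫ y in Ioo (0:ℝ) 1, y ^ (t - 1) * (1 - y) ^ (b - 1)) =ᶠ[nhds a]
      (fun t => Real.Gamma t * Real.Gamma b / Real.Gamma (t + b)) := by
    filter_upwards [isOpen_Ioi.mem_nhds (show a ∈ Ioi (0:ℝ) from ha)] with t ht
    exact betaIntegral_real ht hb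
  have hF' : HasDerivAt (fun t => Real.Gamma t * Real.Gamma b / Real.Gamma (t + b))
      (∫ y in Ioo (0:ℝ) 1, Real.log y * (y ^ (a - 1) * (1 - y) ^ (b - 1))) a :=
    hF.congr_of_eventuallyEq heq.symm
  have key : (∫ y in Ioo (0:ℝ) 1, Real.log y * (y ^ (a - 1) * (1 - y) ^ (b - 1)))
      = (deriv Real.Gamma a * Real.Gamma b * Real.Gamma (a + b)
        - Real.Gamma a * Real.Gamma b * deriv Real.Gamma (a + b)) / Real.Gamma (a + b) ^ 2 :=
    hF'.unique hG
  have hval : ∫ y in Set.Ioo (0:ℝ) 1, Real.log y * betaDensity a b y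
      = (∫ y in Ioo (0:ℝ) 1, Real.log y * (y ^ (a - 1) * (1 - y) ^ (b - 1)))
        / (Real.Gamma a * Real.Gamma b / Real.Gamma (a + b)) := by
    simp_rw [betaDensity, ← mul_div_assoc]
    rw [integral_div]
  rw [hval, key, digamma, digamma]
  field_simp
end

section
/- For all a, b > 0, the variance of the logit log(Y/(1−Y)) under the Beta(a,b) distribution equals ψ₁(a) + ψ₁(b): ∫₀¹ (log(y/(1−y)) − (ψ(a) − ψ(b)))² · f_{a,b}(y) dy = ψ₁(a) + ψ₁(b). -/
open MeasureTheory Real Set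

/-- The trigamma function ψ₁ = ψ'. -/
noncomputable def trigamma (x : ℝ) : ℝ := deriv digamma x

section BetaVarAux

lemma gammaAnalytic : AnalyticOnNhd ℝ Real.Gamma (Set.Ioi 0) := by
  have h1 : AnalyticOnNhd ℂ Complex.Gamma {z : ℂ | 0 < z.re} := by
    refine DifferentiableOn.analyticOnNhd ?_ (isOpen_lt continuous_const Complex.continuous_re)
    intro z hz
    refine (Complex.differentiableAt_Gamma z fun m => ?_).differentiableWithinAt
    intro h
    rw [h] at hz
    simp only [Set.mem_setOf_eq, Complex.neg_re, Complex.natCast_re] at hz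
    have : (0:ℝ) ≤ m := m.cast_nonneg
    linarith
  have h2 : Real.Gamma = fun x : ℝ => (Complex.Gamma (x:ℂ)).re := by
    funext x; rw [Complex.Gamma_ofReal]; simp
  rw [h2]
  intro x hx
  have hx' : (x:ℂ) ∈ {z : ℂ | 0 < z.re} := by simpa using hx
  have h3 : AnalyticAt ℝ Complex.Gamma (x:ℂ) := (h1 _ hx').restrictScalars
  have h4 : AnalyticAt ℝ (fun x : ℝ => (x:ℂ)) x := Complex.ofRealCLM.analyticAt x
  exact (Complex.reCLM.analyticAt _).comp (h3.comp h4)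

lemma gammaDerivAnalytic : AnalyticOnNhd ℝ (deriv Real.Gamma) (Set.Ioi 0) :=
  gammaAnalytic.deriv_of_isOpen isOpen_Ioi

lemma hasDerivAt_Gamma {x : ℝ} (hx : 0 < x) :
    HasDerivAt Real.Gamma (deriv Real.Gamma x) x :=
  ((gammaAnalytic x hx).differentiableAt).hasDerivAt

lemma hasDerivAt_derivGamma {x : ℝ} (hx : 0 < x) :
    HasDerivAt (deriv Real.Gamma) (deriv (deriv Real.Gamma) x) x :=
  ((gammaDerivAnalytic x hx).differentiableAt).hasDerivAt

lemma trigamma_eq {x : ℝ} (hx : 0 < x) :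
    trigamma x = (deriv (deriv Real.Gamma) x * Real.Gamma x - deriv Real.Gamma x ^ 2)
      / Real.Gamma x ^ 2 := by
  have hne : Real.Gamma x ≠ 0 := (Real.Gamma_pos_of_pos hx).ne'
  have h : HasDerivAt (fun y => deriv Real.Gamma y / Real.Gamma y)
      ((deriv (deriv Real.Gamma) x * Real.Gamma x - deriv Real.Gamma x * deriv Real.Gamma x)
        / Real.Gamma x ^ 2) x :=
    (hasDerivAt_derivGamma hx).div (hasDerivAt_Gamma hx) hne
  have : trigamma x = deriv (fun y => deriv Real.Gamma y / Real.Gamma y) x := rfl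
  rw [this, h.deriv]; ring

lemma complex_eq_on (p q : ℝ) {x : ℝ} (hx : x ∈ Set.Ioc (0:ℝ) 1) :
    (x:ℂ) ^ ((p:ℂ)-1) * (1-(x:ℂ)) ^ ((q:ℂ)-1)
      = ((x ^ (p-1) * (1-x) ^ (q-1) : ℝ) : ℂ) := by
  rw [Complex.ofReal_mul, Complex.ofReal_cpow hx.1.le,
    Complex.ofReal_cpow (by linarith [hx.2] : (0:ℝ) ≤ 1 - x)]
  push_cast
  ring

lemma integrableOn_beta {p q : ℝ} (hp : 0 < p) (hq : 0 < q) :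
    IntegrableOn (fun y : ℝ => y ^ (p-1) * (1-y) ^ (q-1)) (Set.Ioo 0 1) := by
  have h := Complex.betaIntegral_convergent (u := (p:ℂ)) (v := (q:ℂ)) (by simpa) (by simpa)
  rw [intervalIntegrable_iff_integrableOn_Ioc_of_le zero_le_one] at h
  have h2 : IntegrableOn (fun x : ℝ => ((x ^ (p-1) * (1-x) ^ (q-1) : ℝ) : ℂ)) (Set.Ioc 0 1) :=
    h.congr_fun (fun x hx => complex_eq_on p q hx) measurableSet_Ioc
  have h3 := h2.re
  have h4 : IntegrableOn (fun y : ℝ => y ^ (p-1) * (1-y) ^ (q-1)) (Set.Ioc 0 1) := by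
    simpa [IntegrableOn] using h3
  exact h4.mono_set Set.Ioo_subset_Ioc_self

lemma beta_value {p q : ℝ} (hp : 0 < p) (hq : 0 < q) :
    ∫ y in Set.Ioo (0:ℝ) 1, y ^ (p-1) * (1-y) ^ (q-1)
      = Real.Gamma p * Real.Gamma q / Real.Gamma (p+q) := by
  have h := Complex.Gamma_mul_Gamma_eq_betaIntegral (s := (p:ℂ)) (t := (q:ℂ))
    (by simpa) (by simpa)
  have hne : Complex.Gamma (p+q) ≠ 0 := by
    rw [show ((p:ℂ)+q) = ((p+q:ℝ):ℂ) by push_cast; ring, Complex.Gamma_ofReal]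
    exact_mod_cast (Real.Gamma_pos_of_pos (by linarith)).ne'
  have hbeta : Complex.betaIntegral p q
      = Complex.Gamma p * Complex.Gamma q / Complex.Gamma ((p:ℂ)+q) := by
    rw [h, mul_div_cancel_left₀ _ hne]
  have hio : Complex.betaIntegral p q
      = ((∫ y in Set.Ioo (0:ℝ) 1, y ^ (p-1) * (1-y) ^ (q-1) : ℝ) : ℂ) := by
    rw [Complex.betaIntegral, intervalIntegral.integral_of_le zero_le_one]
    rw [setIntegral_congr_fun measurableSet_Ioc (fun x hx => complex_eq_on p q hx)]
    rw [← MeasureTheory.Measure.restrict_congr_set MeasureTheory.Ioo_ae_eq_Ioc.symm]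
    exact (integral_ofReal)
  rw [hio] at hbeta
  rw [show ((p:ℂ)+q) = ((p+q:ℝ):ℂ) by push_cast; ring] at hbeta
  rw [Complex.Gamma_ofReal, Complex.Gamma_ofReal, Complex.Gamma_ofReal] at hbeta
  exact_mod_cast hbeta

noncomputable def gg (y : ℝ) : ℝ := Real.log y - Real.log (1 - y)

lemma gg_abs_le {y δ : ℝ} (hy : y ∈ Set.Ioo (0:ℝ) 1) (hδ : 0 < δ) :
    |gg y| ≤ (2/δ) * (y ^ (-δ) * (1-y) ^ (-δ)) := by
  obtain ⟨hy0, hy1⟩ := hy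
  have h1y : 0 < 1 - y := by linarith
  have l1 : |Real.log y| ≤ y ^ (-δ) / δ := by
    rw [abs_of_nonpos (Real.log_nonpos hy0.le hy1.le)]
    have := Real.log_le_rpow_div (le_of_lt (inv_pos.mpr hy0)) hδ
    rw [Real.log_inv] at this
    rwa [Real.inv_rpow hy0.le, ← Real.rpow_neg hy0.le] at this
  have l2 : |Real.log (1-y)| ≤ (1-y) ^ (-δ) / δ := by
    rw [abs_of_nonpos (Real.log_nonpos h1y.le (by linarith))]
    have := Real.log_le_rpow_div (le_of_lt (inv_pos.mpr h1y)) hδ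
    rw [Real.log_inv] at this
    rwa [Real.inv_rpow h1y.le, ← Real.rpow_neg h1y.le] at this
  have hsy : (1:ℝ) ≤ y ^ (-δ) :=
    Real.one_le_rpow_of_pos_of_le_one_of_nonpos hy0 hy1.le (by linarith)
  have hs1y : (1:ℝ) ≤ (1-y) ^ (-δ) :=
    Real.one_le_rpow_of_pos_of_le_one_of_nonpos h1y (by linarith) (by linarith)
  have habs : |gg y| ≤ |Real.log y| + |Real.log (1-y)| := abs_sub _ _
  have key : y ^ (-δ) / δ + (1-y) ^ (-δ) / δ ≤ (2/δ) * (y ^ (-δ) * (1-y) ^ (-δ)) := by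
    rw [← add_div, div_mul_eq_mul_div, div_le_div_iff₀ hδ hδ]
    nlinarith [mul_le_mul_of_nonneg_left hs1y (by positivity : (0:ℝ) ≤ y ^ (-δ)),
      mul_le_mul_of_nonneg_right hsy (by positivity : (0:ℝ) ≤ (1-y) ^ (-δ)), hδ.le]
  linarith

lemma contOn_gg : ContinuousOn gg (Set.Ioo 0 1) := by
  intro x hx
  obtain ⟨hx0, hx1⟩ := hx
  apply ContinuousAt.continuousWithinAt
  exact (Real.continuousAt_log hx0.ne').sub
    ((Real.continuousAt_log (by linarith : (1:ℝ) - x ≠ 0)).comp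
      ((continuous_const.sub continuous_id).continuousAt))

lemma contOn_kernel (p q : ℝ) :
    ContinuousOn (fun y : ℝ => y ^ (p-1) * (1-y) ^ (q-1)) (Set.Ioo 0 1) := by
  apply ContinuousOn.mul
  · exact ContinuousOn.rpow_const continuousOn_id
      (fun x hx => Or.inl hx.1.ne')
  · exact ContinuousOn.rpow_const (continuous_const.sub continuous_id).continuousOn
      (fun x hx => Or.inl (sub_ne_zero.mpr hx.2.ne'))

lemma integrableOn_gg_pow (k : ℕ) {p q : ℝ} (hp : 0 < p) (hq : 0 < q) :
    IntegrableOn (fun y : ℝ => |gg y| ^ k * (y ^ (p-1) * (1-y) ^ (q-1)))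
      (Set.Ioo 0 1) := by
  set δ : ℝ := min p q / (2*(k+1)) with hδdef
  have hδ : 0 < δ := by positivity
  have hkδ : δ * k ≤ min p q / 2 := by
    rw [hδdef]
    rw [div_mul_eq_mul_div, div_le_div_iff₀ (by positivity) (by positivity)]
    have : (k:ℝ) ≤ k + 1 := by linarith
    nlinarith [le_min hp.le hq.le |>.trans (le_refl (min p q)), min_le_left p q,
      lt_min hp hq]
  have hp' : 0 < p - δ * k := by
    have := min_le_left p q; linarith
  have hq' : 0 < q - δ * k := by
    have := min_le_right p q; linarith
  have hint := (integrableOn_beta hp' hq').const_mul ((2/δ)^k)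
  refine Integrable.mono' hint ?_ ?_
  · exact ((((contOn_gg.norm).pow k).mul (contOn_kernel p q)).aestronglyMeasurable
      measurableSet_Ioo)
  · filter_upwards [ae_restrict_mem measurableSet_Ioo] with y hy
    obtain ⟨hy0, hy1⟩ := hy
    have h1y : 0 < 1 - y := by linarith
    have hnn : 0 ≤ |gg y| ^ k * (y ^ (p-1) * (1-y) ^ (q-1)) := by positivity
    rw [Real.norm_eq_abs, abs_of_nonneg hnn]
    have step1 : |gg y| ^ k ≤ ((2/δ) * (y ^ (-δ) * (1-y) ^ (-δ))) ^ k :=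
      pow_le_pow_left₀ (abs_nonneg _) (gg_abs_le ⟨hy0, hy1⟩ hδ) k
    have e1 : (y ^ (-δ)) ^ k = y ^ (-(δ*k)) := by
      rw [← Real.rpow_natCast (y ^ (-δ)) k, ← Real.rpow_mul hy0.le]; ring_nf
    have e2 : ((1-y) ^ (-δ)) ^ k = (1-y) ^ (-(δ*k)) := by
      rw [← Real.rpow_natCast ((1-y) ^ (-δ)) k, ← Real.rpow_mul h1y.le]; ring_nf
    calc |gg y| ^ k * (y ^ (p-1) * (1-y) ^ (q-1))
        ≤ ((2/δ) * (y ^ (-δ) * (1-y) ^ (-δ))) ^ k * (y ^ (p-1) * (1-y) ^ (q-1)) := by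
          apply mul_le_mul_of_nonneg_right step1 (by positivity)
      _ = (2/δ)^k * ((y ^ (-(δ*k)) * y ^ (p-1)) * ((1-y) ^ (-(δ*k)) * (1-y) ^ (q-1))) := by
          rw [mul_pow, mul_pow, e1, e2]; ring
      _ = (2/δ)^k * (y ^ (p - δ*k - 1) * (1-y) ^ (q - δ*k - 1)) := by
          rw [← Real.rpow_add hy0, ← Real.rpow_add h1y]; ring_nf


lemma kernel_eq (a b t : ℝ) {y : ℝ} (hy : y ∈ Set.Ioo (0:ℝ) 1) :
    Real.exp (t * gg y) * (y ^ (a-1) * (1-y) ^ (b-1))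
      = y ^ (a+t-1) * (1-y) ^ (b-t-1) := by
  obtain ⟨hy0, hy1⟩ := hy
  have h1y : 0 < 1 - y := by linarith
  have e1 : Real.exp (t * Real.log y) = y ^ t := by
    rw [Real.rpow_def_of_pos hy0, mul_comm]
  have e2 : Real.exp (-(t * Real.log (1-y))) = (1-y) ^ (-t) := by
    rw [Real.rpow_def_of_pos h1y]; congr 1; ring
  rw [show t * gg y = t * Real.log y + -(t * Real.log (1-y)) by rw [gg]; ring,
    Real.exp_add, e1, e2,
    show a+t-1 = t+(a-1) by ring, Real.rpow_add hy0,
    show b-t-1 = -t+(b-1) by ring, Real.rpow_add h1y]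
  ring

lemma contOn_integrand (a b t : ℝ) (k : ℕ) :
    ContinuousOn (fun y : ℝ => gg y ^ k * Real.exp (t * gg y) * (y ^ (a-1) * (1-y) ^ (b-1)))
      (Set.Ioo 0 1) :=
  (((contOn_gg.pow k).mul
    (Real.continuous_exp.comp_continuousOn (continuousOn_const.mul contOn_gg)))).mul
    (contOn_kernel a b)

lemma int_kernel {a b : ℝ} (ha : 0 < a) (hb : 0 < b) (k : ℕ) {t : ℝ} (ht : |t| < min a b) :
    IntegrableOn (fun y : ℝ => gg y ^ k * Real.exp (t * gg y) * (y ^ (a-1) * (1-y) ^ (b-1)))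
      (Set.Ioo 0 1) := by
  obtain ⟨ht1, ht2⟩ := abs_lt.mp ht
  have hp : 0 < a + t := by have := min_le_left a b; linarith
  have hq : 0 < b - t := by have := min_le_right a b; linarith
  refine Integrable.mono' (integrableOn_gg_pow k hp hq) ?_ ?_
  · exact (contOn_integrand a b t k).aestronglyMeasurable measurableSet_Ioo
  · filter_upwards [ae_restrict_mem measurableSet_Ioo] with y hy
    have h1y : 0 < 1 - y := by linarith [hy.2]
    rw [Real.norm_eq_abs, abs_mul, abs_mul, abs_pow,
      abs_of_pos (Real.exp_pos _), abs_of_nonneg (mul_nonneg (Real.rpow_nonneg hy.1.le _) (Real.rpow_nonneg h1y.le _)),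
      mul_assoc, kernel_eq a b t hy]

lemma hasDerivAt_beta_int {a b : ℝ} (ha : 0 < a) (hb : 0 < b) (k : ℕ) {t₀ : ℝ}
    (ht₀ : |t₀| < min a b / 4) :
    HasDerivAt
      (fun t => ∫ y in Set.Ioo (0:ℝ) 1,
        gg y ^ k * Real.exp (t * gg y) * (y ^ (a-1) * (1-y) ^ (b-1)))
      (∫ y in Set.Ioo (0:ℝ) 1,
        gg y ^ (k+1) * Real.exp (t₀ * gg y) * (y ^ (a-1) * (1-y) ^ (b-1))) t₀ := by
  have hm : 0 < min a b := lt_min ha hb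
  have hma := min_le_left a b
  have hmb := min_le_right a b
  set m := min a b with hmdef
  set c : ℝ := m / 2 with hcdef
  have hbound_int : IntegrableOn (fun y : ℝ =>
      |gg y| ^ (k+1) * (y ^ (a+c-1) * (1-y) ^ (b-c-1))
      + |gg y| ^ (k+1) * (y ^ (a-c-1) * (1-y) ^ (b+c-1))) (Set.Ioo 0 1) := by
    have h1 := integrableOn_gg_pow (p := a+c) (q := b-c) (k+1) (by positivity)
      (by simp only [hcdef]; linarith)
    have h2 := integrableOn_gg_pow (p := a-c) (q := b+c) (k+1)
      (by simp only [hcdef]; linarith) (by positivity)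
    exact h1.add h2
  have key := hasDerivAt_integral_of_dominated_loc_of_deriv_le
    (μ := volume.restrict (Set.Ioo (0:ℝ) 1)) (x₀ := t₀) (s := Metric.ball t₀ (m/4)) (Metric.ball_mem_nhds t₀ (by positivity))
    (F := fun t y => gg y ^ k * Real.exp (t * gg y) * (y ^ (a-1) * (1-y) ^ (b-1)))
    (F' := fun t y => gg y ^ (k+1) * Real.exp (t * gg y) * (y ^ (a-1) * (1-y) ^ (b-1)))
    (bound := fun y => |gg y| ^ (k+1) * (y ^ (a+c-1) * (1-y) ^ (b-c-1))
      + |gg y| ^ (k+1) * (y ^ (a-c-1) * (1-y) ^ (b+c-1)))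
    (Filter.Eventually.of_forall fun x =>
      (contOn_integrand a b x k).aestronglyMeasurable measurableSet_Ioo)
    (int_kernel ha hb k (by linarith))
    ((int_kernel ha hb (k+1) (by linarith : |t₀| < min a b)).aestronglyMeasurable)
    ?_ hbound_int ?_
  · exact key.2
  · -- bound
    filter_upwards [ae_restrict_mem measurableSet_Ioo] with y hy
    intro x hx
    obtain ⟨hy0, hy1⟩ := hy
    have h1y : 0 < 1 - y := by linarith
    have hρ : (0:ℝ) ≤ y ^ (a-1) * (1-y) ^ (b-1) :=
      mul_nonneg (Real.rpow_nonneg hy0.le _) (Real.rpow_nonneg h1y.le _)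
    have hx2 : |x| ≤ c := by
      have h := mem_ball_iff_norm.mp hx
      rw [Real.norm_eq_abs] at h
      have h2 : |x| ≤ |x - t₀| + |t₀| := by
        calc |x| = |(x - t₀) + t₀| := by ring_nf
          _ ≤ |x - t₀| + |t₀| := abs_add_le _ _
      simp only [hcdef]
      linarith
    obtain ⟨hx3, hx4⟩ := abs_le.mp hx2
    have hexp : Real.exp (x * gg y) ≤ Real.exp (c * gg y) + Real.exp (-c * gg y) := by
      rcases le_total 0 (gg y) with h | h
      · calc Real.exp (x * gg y) ≤ Real.exp (c * gg y) :=
            Real.exp_le_exp.mpr (mul_le_mul_of_nonneg_right hx4 h)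
          _ ≤ _ := le_add_of_nonneg_right (Real.exp_pos _).le
      · calc Real.exp (x * gg y) ≤ Real.exp (-c * gg y) :=
            Real.exp_le_exp.mpr (by nlinarith)
          _ ≤ _ := le_add_of_nonneg_left (Real.exp_pos _).le
    calc ‖gg y ^ (k+1) * Real.exp (x * gg y) * (y ^ (a-1) * (1-y) ^ (b-1))‖
        = |gg y| ^ (k+1) * Real.exp (x * gg y) * (y ^ (a-1) * (1-y) ^ (b-1)) := by
          rw [Real.norm_eq_abs, abs_mul, abs_mul, abs_pow,
            abs_of_pos (Real.exp_pos _), abs_of_nonneg hρ]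
      _ ≤ |gg y| ^ (k+1) * (Real.exp (c * gg y) + Real.exp (-c * gg y))
            * (y ^ (a-1) * (1-y) ^ (b-1)) := by
          apply mul_le_mul_of_nonneg_right (mul_le_mul_of_nonneg_left hexp (by positivity)) hρ
      _ = |gg y| ^ (k+1) * (Real.exp (c * gg y) * (y ^ (a-1) * (1-y) ^ (b-1)))
            + |gg y| ^ (k+1) * (Real.exp (-c * gg y) * (y ^ (a-1) * (1-y) ^ (b-1))) := by ring
      _ = |gg y| ^ (k+1) * (y ^ (a+c-1) * (1-y) ^ (b-c-1))
            + |gg y| ^ (k+1) * (y ^ (a-c-1) * (1-y) ^ (b+c-1)) := by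
          rw [kernel_eq a b c ⟨hy0, hy1⟩, show -c * gg y = (-c) * gg y by ring,
            kernel_eq a b (-c) ⟨hy0, hy1⟩]
          ring_nf
  · -- differentiability
    filter_upwards [ae_restrict_mem measurableSet_Ioo] with y hy
    intro x hx
    have h := ((((hasDerivAt_id x).mul_const (gg y)).exp.const_mul (gg y ^ k)).mul_const
      (y ^ (a-1) * (1-y) ^ (b-1)))
    simp only [id_eq, one_mul] at h
    refine h.congr_deriv ?_
    ring

lemma F_eq {a b : ℝ} (ha : 0 < a) (hb : 0 < b) {t : ℝ} (ht : |t| < min a b) :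
    ∫ y in Set.Ioo (0:ℝ) 1, gg y ^ 0 * Real.exp (t * gg y) * (y ^ (a-1) * (1-y) ^ (b-1))
      = Real.Gamma (a+t) * Real.Gamma (b-t) / Real.Gamma (a+b) := by
  obtain ⟨ht1, ht2⟩ := abs_lt.mp ht
  have hp : 0 < a + t := by have := min_le_left a b; linarith
  have hq : 0 < b - t := by have := min_le_right a b; linarith
  rw [setIntegral_congr_fun measurableSet_Ioo
    (fun y hy => by rw [pow_zero, one_mul, kernel_eq a b t hy]),
    beta_value hp hq, show a+t+(b-t) = a+b by ring]

lemma F1_eq {a b : ℝ} (ha : 0 < a) (hb : 0 < b) {t₀ : ℝ} (ht₀ : |t₀| < min a b / 4) :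
    (∫ y in Set.Ioo (0:ℝ) 1, gg y ^ 1 * Real.exp (t₀ * gg y) * (y ^ (a-1) * (1-y) ^ (b-1)))
      = (deriv Real.Gamma (a+t₀) * Real.Gamma (b-t₀)
          - Real.Gamma (a+t₀) * deriv Real.Gamma (b-t₀)) / Real.Gamma (a+b) := by
  have hm : 0 < min a b := lt_min ha hb
  obtain ⟨ht1, ht2⟩ := abs_lt.mp ht₀
  have hpa : 0 < a + t₀ := by have := min_le_left a b; linarith
  have hpb : 0 < b - t₀ := by have := min_le_right a b; linarith
  have hd := hasDerivAt_beta_int ha hb 0 ht₀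
  have h1 : HasDerivAt (fun t : ℝ => Real.Gamma (a+t)) (deriv Real.Gamma (a+t₀)) t₀ := by
    simpa [Function.comp_def] using (hasDerivAt_Gamma hpa).comp t₀ ((hasDerivAt_id t₀).const_add a)
  have h2 : HasDerivAt (fun t : ℝ => Real.Gamma (b-t)) (-deriv Real.Gamma (b-t₀)) t₀ := by
    simpa [Function.comp_def] using (hasDerivAt_Gamma hpb).comp t₀ ((hasDerivAt_id t₀).const_sub b)
  have hG : HasDerivAt (fun t => Real.Gamma (a+t) * Real.Gamma (b-t) / Real.Gamma (a+b))
      ((deriv Real.Gamma (a+t₀) * Real.Gamma (b-t₀)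
        - Real.Gamma (a+t₀) * deriv Real.Gamma (b-t₀)) / Real.Gamma (a+b)) t₀ := by
    have := (h1.mul h2).div_const (Real.Gamma (a+b))
    refine this.congr_deriv ?_
    ring
  have hev : (fun t => ∫ y in Set.Ioo (0:ℝ) 1,
        gg y ^ 0 * Real.exp (t * gg y) * (y ^ (a-1) * (1-y) ^ (b-1)))
      =ᶠ[nhds t₀] (fun t => Real.Gamma (a+t) * Real.Gamma (b-t) / Real.Gamma (a+b)) := by
    filter_upwards [Metric.ball_mem_nhds t₀ (by positivity : (0:ℝ) < min a b / 2)] with t ht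
    have h := mem_ball_iff_norm.mp ht
    rw [Real.norm_eq_abs] at h
    have habs : |t| < min a b := by
      calc |t| = |(t - t₀) + t₀| := by ring_nf
        _ ≤ |t - t₀| + |t₀| := abs_add_le _ _
        _ < min a b := by linarith
    exact F_eq ha hb habs
  have hd2 := hG.congr_of_eventuallyEq hev
  simpa using hd.unique hd2

lemma F2_eq {a b : ℝ} (ha : 0 < a) (hb : 0 < b) :
    (∫ y in Set.Ioo (0:ℝ) 1, gg y ^ 2 * Real.exp ((0:ℝ) * gg y) * (y ^ (a-1) * (1-y) ^ (b-1)))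
      = (deriv (deriv Real.Gamma) a * Real.Gamma b
          - 2 * deriv Real.Gamma a * deriv Real.Gamma b
          + Real.Gamma a * deriv (deriv Real.Gamma) b) / Real.Gamma (a+b) := by
  have hm : 0 < min a b := lt_min ha hb
  have h0 : |(0:ℝ)| < min a b / 4 := by rw [abs_zero]; positivity
  have hd := hasDerivAt_beta_int ha hb 1 h0
  have h1 : HasDerivAt (fun t : ℝ => deriv Real.Gamma (a+t)) (deriv (deriv Real.Gamma) a) 0 := by
    simpa [Function.comp_def] using (hasDerivAt_derivGamma (by linarith : (0:ℝ) < a + 0)).comp 0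
      ((hasDerivAt_id 0).const_add a)
  have h2 : HasDerivAt (fun t : ℝ => Real.Gamma (b-t)) (-deriv Real.Gamma b) 0 := by
    simpa [Function.comp_def] using (hasDerivAt_Gamma (by linarith : (0:ℝ) < b - 0)).comp 0
      ((hasDerivAt_id 0).const_sub b)
  have h3 : HasDerivAt (fun t : ℝ => Real.Gamma (a+t)) (deriv Real.Gamma a) 0 := by
    simpa [Function.comp_def] using (hasDerivAt_Gamma (by linarith : (0:ℝ) < a + 0)).comp 0
      ((hasDerivAt_id 0).const_add a)
  have h4 : HasDerivAt (fun t : ℝ => deriv Real.Gamma (b-t)) (-(deriv (deriv Real.Gamma) b)) 0 := by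
    simpa [Function.comp_def] using (hasDerivAt_derivGamma (by linarith : (0:ℝ) < b - 0)).comp 0
      ((hasDerivAt_id 0).const_sub b)
  have hG : HasDerivAt (fun t => (deriv Real.Gamma (a+t) * Real.Gamma (b-t)
        - Real.Gamma (a+t) * deriv Real.Gamma (b-t)) / Real.Gamma (a+b))
      ((deriv (deriv Real.Gamma) a * Real.Gamma b
        - 2 * deriv Real.Gamma a * deriv Real.Gamma b
        + Real.Gamma a * deriv (deriv Real.Gamma) b) / Real.Gamma (a+b)) 0 := by
    have := ((h1.mul h2).sub (h3.mul h4)).div_const (Real.Gamma (a+b))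
    refine this.congr_deriv ?_
    simp only [sub_zero, add_zero]
    ring
  have hev : (fun t => ∫ y in Set.Ioo (0:ℝ) 1,
        gg y ^ 1 * Real.exp (t * gg y) * (y ^ (a-1) * (1-y) ^ (b-1)))
      =ᶠ[nhds 0] (fun t => (deriv Real.Gamma (a+t) * Real.Gamma (b-t)
        - Real.Gamma (a+t) * deriv Real.Gamma (b-t)) / Real.Gamma (a+b)) := by
    filter_upwards [Metric.ball_mem_nhds 0 (by positivity : (0:ℝ) < min a b / 4)] with t ht
    exact F1_eq ha hb (by simpa [Real.norm_eq_abs] using mem_ball_zero_iff.mp ht)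
  have hd2 := hG.congr_of_eventuallyEq hev
  have := hd.unique hd2
  simpa using this

/-- Var[log(Y/(1−Y))] under Beta(a,b) equals ψ₁(a) + ψ₁(b). -/
theorem beta_var_logit (a b : ℝ) (ha : 0 < a) (hb : 0 < b) :
    ∫ y in Set.Ioo (0:ℝ) 1,
      (Real.log (y / (1 - y)) - (digamma a - digamma b)) ^ 2 * betaDensity a b y
      = trigamma a + trigamma b := by
  have hm : 0 < min a b := lt_min ha hb
  have h0m : |(0:ℝ)| < min a b := by rw [abs_zero]; exact hm
  have hΓa := Real.Gamma_pos_of_pos ha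
  have hΓb := Real.Gamma_pos_of_pos hb
  have hΓs := Real.Gamma_pos_of_pos (by linarith : 0 < a + b)
  set μ : ℝ := digamma a - digamma b with hμ
  set B : ℝ := Real.Gamma a * Real.Gamma b / Real.Gamma (a+b) with hB
  have hBpos : 0 < B := by positivity
  -- moments
  have hM0 : ∫ y in Set.Ioo (0:ℝ) 1, y ^ (a-1) * (1-y) ^ (b-1) = B := beta_value ha hb
  have hM1 : ∫ y in Set.Ioo (0:ℝ) 1, gg y * (y ^ (a-1) * (1-y) ^ (b-1))
      = (deriv Real.Gamma a * Real.Gamma b - Real.Gamma a * deriv Real.Gamma b)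
        / Real.Gamma (a+b) := by
    have := F1_eq ha hb (t₀ := 0) (by rw [abs_zero]; positivity)
    simpa using this
  have hM2 : ∫ y in Set.Ioo (0:ℝ) 1, gg y ^ 2 * (y ^ (a-1) * (1-y) ^ (b-1))
      = (deriv (deriv Real.Gamma) a * Real.Gamma b
          - 2 * deriv Real.Gamma a * deriv Real.Gamma b
          + Real.Gamma a * deriv (deriv Real.Gamma) b) / Real.Gamma (a+b) := by
    have := F2_eq ha hb
    simpa using this
  -- integrability
  have hI0 : IntegrableOn (fun y : ℝ => y ^ (a-1) * (1-y) ^ (b-1)) (Set.Ioo 0 1) :=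
    integrableOn_beta ha hb
  have hI1 : IntegrableOn (fun y : ℝ => gg y * (y ^ (a-1) * (1-y) ^ (b-1))) (Set.Ioo 0 1) := by
    have := int_kernel ha hb 1 h0m
    simpa using this
  have hI2 : IntegrableOn (fun y : ℝ => gg y ^ 2 * (y ^ (a-1) * (1-y) ^ (b-1))) (Set.Ioo 0 1) := by
    have := int_kernel ha hb 2 h0m
    simpa using this
  -- rewrite the integrand
  have hcongr : ∫ y in Set.Ioo (0:ℝ) 1,
      (Real.log (y / (1 - y)) - μ) ^ 2 * betaDensity a b y
      = ∫ y in Set.Ioo (0:ℝ) 1,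
        (gg y ^ 2 * (y ^ (a-1) * (1-y) ^ (b-1))) * B⁻¹
        + ((gg y * (y ^ (a-1) * (1-y) ^ (b-1))) * (-(2*μ)/B)
          + (y ^ (a-1) * (1-y) ^ (b-1)) * (μ^2/B)) := by
    refine setIntegral_congr_fun measurableSet_Ioo (fun y hy => ?_)
    have hy0 := hy.1
    have h1y : (0:ℝ) < 1 - y := by linarith [hy.2]
    rw [Real.log_div hy0.ne' h1y.ne']
    show (Real.log y - Real.log (1-y) - μ)^2
        * (y ^ (a-1) * (1-y) ^ (b-1) / (Real.Gamma a * Real.Gamma b / Real.Gamma (a+b))) = _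
    rw [← hB]
    simp only [gg]
    field_simp
    ring
  have hadd : Integrable (fun y : ℝ => (gg y * (y ^ (a-1) * (1-y) ^ (b-1))) * (-(2*μ)/B)
      + (y ^ (a-1) * (1-y) ^ (b-1)) * (μ^2/B)) (volume.restrict (Set.Ioo 0 1)) :=
    (hI1.mul_const _).add (hI0.mul_const _)
  rw [hcongr, integral_add ((hI2.mul_const _)) hadd,
    integral_add (hI1.mul_const _) (hI0.mul_const _),
    integral_mul_const, integral_mul_const, integral_mul_const, hM0, hM1, hM2,
    trigamma_eq ha, trigamma_eq hb]
  rw [hB, hμ, show digamma a = deriv Real.Gamma a / Real.Gamma a from rfl,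
    show digamma b = deriv Real.Gamma b / Real.Gamma b from rfl]
  field_simp
  ring

end BetaVarAux
end

section
/- For all a, b > 0, the variance of log(1−Y) under the Beta(a,b) distribution equals ψ₁(b) − ψ₁(a+b): ∫₀¹ (log(1−y) − (ψ(b) − ψ(a+b)))² · f_{a,b}(y) dy = ψ₁(b) − ψ₁(a+b). -/
open MeasureTheory Real Set

open Filter


lemma meas_w (a t : ℝ) : Measurable (fun y : ℝ => y ^ (a-1) * (1-y) ^ (t-1)) := by
  fun_prop

lemma meas_logw (a t : ℝ) (n : ℕ) :
    Measurable (fun y : ℝ => (Real.log (1-y))^n * (y ^ (a-1) * (1-y) ^ (t-1))) := by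
  exact ((Real.measurable_log.comp (measurable_const.sub measurable_id)).pow_const n).mul
    (meas_w a t)

/-- Integrability of the Beta integrand. -/
lemma int_w (a t : ℝ) (ha : 0 < a) (ht : 0 < t) :
    IntegrableOn (fun y : ℝ => y ^ (a-1) * (1-y) ^ (t-1)) (Ioo 0 1) := by
  have h := (Complex.betaIntegral_convergent (u := (a:ℂ)) (v := (t:ℂ)) (by simpa) (by simpa)).1
  have h2 : IntegrableOn (fun x : ℝ =>
      ((x:ℂ) ^ ((a:ℂ)-1) * (1-(x:ℂ)) ^ ((t:ℂ)-1)).re) (Set.Ioc 0 1) := h.re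
  rw [← integrableOn_Ioc_iff_integrableOn_Ioo]
  refine (IntegrableOn.congr_fun_ae h2 ?_)
  filter_upwards [ae_restrict_mem measurableSet_Ioc] with x hx
  have hx0 : (0:ℝ) ≤ x := le_of_lt hx.1
  have hx1 : (0:ℝ) ≤ 1 - x := by linarith [hx.2]
  have e1 : (x:ℂ) ^ ((a:ℂ)-1) = ((x ^ (a-1) : ℝ) : ℂ) := by
    rw [Complex.ofReal_cpow hx0]; push_cast; ring_nf
  have e2 : (1-(x:ℂ)) ^ ((t:ℂ)-1) = (((1-x) ^ (t-1) : ℝ) : ℂ) := by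
    rw [show (1-(x:ℂ)) = (((1-x:ℝ)):ℂ) by push_cast; ring,
      Complex.ofReal_cpow hx1]; push_cast; ring_nf
  rw [e1, e2, ← Complex.ofReal_mul, Complex.ofReal_re]

/-- The value of the Beta integral. -/
lemma w_integral (a t : ℝ) (ha : 0 < a) (ht : 0 < t) :
    ∫ y in Ioo (0:ℝ) 1, y ^ (a-1) * (1-y) ^ (t-1)
      = Real.Gamma a * Real.Gamma t / Real.Gamma (a+t) := by
  have h := Complex.Gamma_mul_Gamma_eq_betaIntegral
    (s := (a:ℂ)) (t := (t:ℂ)) (by simpa) (by simpa)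
  have hne : Complex.Gamma ((a:ℂ)+(t:ℂ)) ≠ 0 := by
    rw [show ((a:ℂ)+(t:ℂ)) = ((a+t : ℝ) : ℂ) by push_cast; ring, Complex.Gamma_ofReal]
    exact_mod_cast (Real.Gamma_pos_of_pos (by linarith)).ne'
  have hbeta : Complex.betaIntegral a t
      = ((∫ y in Ioo (0:ℝ) 1, y ^ (a-1) * (1-y) ^ (t-1) : ℝ) : ℂ) := by
    rw [Complex.betaIntegral, intervalIntegral.integral_of_le (by norm_num : (0:ℝ) ≤ 1),
      MeasureTheory.integral_Ioc_eq_integral_Ioo]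
    have hcongr : ∫ x in Ioo (0:ℝ) 1, (x:ℂ) ^ ((a:ℂ)-1) * (1-(x:ℂ)) ^ ((t:ℂ)-1)
        = ∫ x in Ioo (0:ℝ) 1, ((x ^ (a-1) * (1-x) ^ (t-1) : ℝ) : ℂ) := by
      refine setIntegral_congr_ae measurableSet_Ioo ?_
      filter_upwards with x hx
      have hx0 : (0:ℝ) ≤ x := le_of_lt hx.1
      have hx1 : (0:ℝ) ≤ 1 - x := by linarith [hx.2]
      have e1 : (x:ℂ) ^ ((a:ℂ)-1) = ((x ^ (a-1) : ℝ) : ℂ) := by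
        rw [Complex.ofReal_cpow hx0]; push_cast; ring_nf
      have e2 : (1-(x:ℂ)) ^ ((t:ℂ)-1) = (((1-x) ^ (t-1) : ℝ) : ℂ) := by
        rw [show (1-(x:ℂ)) = (((1-x:ℝ)):ℂ) by push_cast; ring,
          Complex.ofReal_cpow hx1]; push_cast; ring_nf
      rw [e1, e2, ← Complex.ofReal_mul]
    rw [hcongr]; exact integral_ofReal
  rw [hbeta] at h
  have := congrArg Complex.re h
  simp only [show ((a:ℂ)+(t:ℂ)) = ((a+t : ℝ) : ℂ) by push_cast; ring,
    Complex.Gamma_ofReal, ← Complex.ofReal_mul, Complex.ofReal_re] at this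
  have hG : Real.Gamma (a+t) ≠ 0 := (Real.Gamma_pos_of_pos (by linarith)).ne'
  field_simp at this ⊢
  linarith [this]

open MeasureTheory Real Set Filter

section
variable {a t : ℝ}

/-- |log u| ≤ u^(-ε)/ε for 0 < u ≤ 1. -/
lemma abs_log_le_s7 (u ε : ℝ) (hu0 : 0 < u) (hu1 : u ≤ 1) (hε : 0 < ε) :
    |Real.log u| ≤ u ^ (-ε) / ε := by
  have hlog : Real.log u ≤ 0 := Real.log_nonpos (le_of_lt hu0) hu1
  rw [abs_of_nonpos hlog]
  have h1 : -Real.log u = Real.log u⁻¹ := by rw [Real.log_inv]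
  have h2 : Real.log (u⁻¹ ^ ε) = ε * Real.log u⁻¹ := Real.log_rpow (by positivity) ε
  have h3 : Real.log (u⁻¹ ^ ε) ≤ u⁻¹ ^ ε := by
    have := Real.log_le_sub_one_of_pos (x := u⁻¹ ^ ε) (by positivity)
    linarith [Real.rpow_nonneg (le_of_lt (inv_pos.mpr hu0)) ε]
  have h4 : u⁻¹ ^ ε = u ^ (-ε) := by
    rw [← Real.rpow_neg_one u, ← Real.rpow_mul (le_of_lt hu0)]
    norm_num
  rw [h1, le_div_iff₀ hε]
  calc Real.log u⁻¹ * ε = Real.log (u⁻¹ ^ ε) := by rw [h2]; ring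
    _ ≤ u⁻¹ ^ ε := h3
    _ = u ^ (-ε) := h4

/-- Pointwise bound: |log(1-y)|^n (1-y)^(s-1) ≤ ε⁻ⁿ (1-y)^(s-nε-1) for y ∈ (0,1). -/
lemma logpow_bound {y : ℝ} (hy : y ∈ Ioo (0:ℝ) 1) (n : ℕ) {ε s : ℝ} (hε : 0 < ε) :
    |Real.log (1-y)|^n * (1-y) ^ (s-1) ≤ ε⁻¹^n * (1-y) ^ (s - n*ε - 1) := by
  have h0 : (0:ℝ) < 1 - y := by linarith [hy.2]
  have h1 : 1 - y ≤ 1 := by linarith [hy.1]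
  have hb := abs_log_le_s7 (1-y) ε h0 h1 hε
  calc |Real.log (1-y)|^n * (1-y) ^ (s-1)
      ≤ ((1-y) ^ (-ε) / ε)^n * (1-y) ^ (s-1) :=
        mul_le_mul_of_nonneg_right (pow_le_pow_left₀ (abs_nonneg _) hb n)
          (Real.rpow_nonneg (le_of_lt h0) _)
    _ = ε⁻¹^n * (1-y) ^ (s - n*ε - 1) := by
        rw [div_pow, ← Real.rpow_natCast ((1-y) ^ (-ε)) n, ← Real.rpow_mul (le_of_lt h0),
          div_eq_mul_inv, mul_comm (((1-y) ^ (-ε*n))) _, inv_pow]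
        rw [mul_assoc, ← Real.rpow_add h0]
        ring_nf

/-- Integrability with log powers. -/
lemma int_logpow (ha : 0 < a) (ht : 0 < t) (n : ℕ) :
    IntegrableOn (fun y : ℝ => (Real.log (1-y))^n * (y ^ (a-1) * (1-y) ^ (t-1)))
      (Ioo 0 1) := by
  set ε := t/(2*((n:ℝ)+1)) with hεdef
  have hε : 0 < ε := by positivity
  have hεt : ε * (2*((n:ℝ)+1)) = t := by
    rw [hεdef]; field_simp
  have ht' : 0 < t - n*ε := by nlinarith [hε, Nat.cast_nonneg (α := ℝ) n]
  refine Integrable.mono' ((int_w a (t - n*ε) ha ht').const_mul (ε⁻¹^n))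
    ((meas_logw a t n).aestronglyMeasurable) ?_
  rw [ae_restrict_iff' measurableSet_Ioo]
  filter_upwards with y hy
  have h0 : (0:ℝ) < 1 - y := by linarith [hy.2]
  have hy0 : (0:ℝ) < y := hy.1
  have hnorm : ‖(Real.log (1-y))^n * (y ^ (a-1) * (1-y) ^ (t-1))‖
      = |Real.log (1-y)|^n * (y ^ (a-1) * (1-y) ^ (t-1)) := by
    rw [Real.norm_eq_abs, abs_mul, abs_pow, abs_of_nonneg
      (mul_nonneg (Real.rpow_nonneg (le_of_lt hy0) _) (Real.rpow_nonneg (le_of_lt h0) _))]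
  rw [hnorm]
  calc |Real.log (1-y)|^n * (y ^ (a-1) * (1-y) ^ (t-1))
      = y ^ (a-1) * (|Real.log (1-y)|^n * (1-y) ^ (t-1)) := by ring
    _ ≤ y ^ (a-1) * (ε⁻¹^n * (1-y) ^ (t - n*ε - 1)) :=
        mul_le_mul_of_nonneg_left (logpow_bound hy n hε) (Real.rpow_nonneg (le_of_lt hy0) _)
    _ = ε⁻¹^n * (y ^ (a-1) * (1-y) ^ (t - n*ε - 1)) := by ring

end

lemma key_deriv {a t : ℝ} (ha : 0 < a) (ht : 0 < t) (n : ℕ) :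
    HasDerivAt
      (fun s => ∫ y in Ioo (0:ℝ) 1, (Real.log (1-y))^n * (y ^ (a-1) * (1-y) ^ (s-1)))
      (∫ y in Ioo (0:ℝ) 1, (Real.log (1-y))^(n+1) * (y ^ (a-1) * (1-y) ^ (t-1))) t := by
  have ht2 : 0 < t/2 := by linarith
  have hbound : ∀ᵐ y ∂(volume.restrict (Ioo (0:ℝ) 1)), ∀ s ∈ Metric.ball t (t/2),
      ‖(Real.log (1-y))^(n+1) * (y ^ (a-1) * (1-y) ^ (s-1))‖
        ≤ ‖(Real.log (1-y))^(n+1) * (y ^ (a-1) * (1-y) ^ (t/2-1))‖ := by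
    rw [ae_restrict_iff' measurableSet_Ioo]
    filter_upwards with y hy s hs
    have h0 : (0:ℝ) < 1 - y := by linarith [hy.2]
    have h1 : 1 - y ≤ 1 := by linarith [hy.1]
    have hy0 : (0:ℝ) ≤ y := le_of_lt hy.1
    have hst : t/2 - 1 ≤ s - 1 := by
      have h := Metric.mem_ball.mp hs
      rw [Real.dist_eq] at h
      have := abs_lt.mp h
      linarith [this.1]
    have hrle : (1-y) ^ (s-1) ≤ (1-y) ^ (t/2-1) :=
      Real.rpow_le_rpow_of_exponent_ge h0 h1 hst
    rw [Real.norm_eq_abs, Real.norm_eq_abs, abs_mul, abs_mul, abs_mul, abs_mul,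
      abs_of_nonneg (Real.rpow_nonneg hy0 (a-1)),
      abs_of_nonneg (Real.rpow_nonneg (le_of_lt h0) (s-1)),
      abs_of_nonneg (Real.rpow_nonneg (le_of_lt h0) (t/2-1))]
    have hpos : (0:ℝ) ≤ |Real.log (1-y) ^ (n+1)| * y ^ (a-1) :=
      mul_nonneg (abs_nonneg _) (Real.rpow_nonneg hy0 _)
    calc |Real.log (1-y) ^ (n+1)| * (y ^ (a-1) * (1-y) ^ (s-1))
        = (|Real.log (1-y) ^ (n+1)| * y ^ (a-1)) * (1-y) ^ (s-1) := by ring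
      _ ≤ (|Real.log (1-y) ^ (n+1)| * y ^ (a-1)) * (1-y) ^ (t/2-1) :=
          mul_le_mul_of_nonneg_left hrle hpos
      _ = |Real.log (1-y) ^ (n+1)| * (y ^ (a-1) * (1-y) ^ (t/2-1)) := by ring
  have hdiff : ∀ᵐ y ∂(volume.restrict (Ioo (0:ℝ) 1)), ∀ s ∈ Metric.ball t (t/2),
      HasDerivAt (fun s => (Real.log (1-y))^n * (y ^ (a-1) * (1-y) ^ (s-1)))
        ((Real.log (1-y))^(n+1) * (y ^ (a-1) * (1-y) ^ (s-1))) s := by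
    rw [ae_restrict_iff' measurableSet_Ioo]
    filter_upwards with y hy s _
    have h0 : (0:ℝ) < 1 - y := by linarith [hy.2]
    have hrpow : HasDerivAt (fun s : ℝ => (1-y) ^ (s-1))
        ((1-y) ^ (s-1) * Real.log (1-y)) s := by
      have := ((Real.hasStrictDerivAt_const_rpow h0 (s-1)).hasDerivAt.comp s
        ((hasDerivAt_id s).sub_const 1))
      simpa [Function.comp_def] using this
    have h2 := (hrpow.const_mul (y ^ (a-1))).const_mul ((Real.log (1-y))^n)
    refine h2.congr_deriv ?_
    ring
  exact (hasDerivAt_integral_of_dominated_loc_of_deriv_le (Metric.ball_mem_nhds t ht2)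
    (Filter.Eventually.of_forall fun s => (meas_logw a s n).aestronglyMeasurable)
    (int_logpow ha ht n)
    ((meas_logw a t (n+1)).aestronglyMeasurable)
    hbound ((int_logpow ha ht2 (n+1)).norm) hdiff).2


lemma ne_neg_nat {x : ℝ} (hx : 0 < x) : ∀ m : ℕ, x ≠ -m := by
  intro m h
  have : (0:ℝ) ≤ (m:ℝ) := Nat.cast_nonneg m
  linarith [h ▸ hx]

lemma ne_neg_natC {x : ℝ} (hx : 0 < x) : ∀ m : ℕ, (x:ℂ) ≠ -m := by
  intro m h
  exact ne_neg_nat hx m (by exact_mod_cast h)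

lemma Gamma_hasDerivAt {x : ℝ} (hx : 0 < x) :
    HasDerivAt Real.Gamma (digamma x * Real.Gamma x) x := by
  have hd := (Real.differentiableAt_Gamma (ne_neg_nat hx)).hasDerivAt
  have : digamma x * Real.Gamma x = deriv Real.Gamma x := by
    rw [digamma, div_mul_cancel₀ _ (Real.Gamma_pos_of_pos hx).ne']
  rw [this]
  exact hd

lemma derivGamma_eq {x : ℝ} (hx : 0 < x) :
    deriv Real.Gamma x = (deriv Complex.Gamma x).re := by
  have hC := (Complex.differentiableAt_Gamma _ (ne_neg_natC hx)).hasDerivAt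
  have h1 := hC.real_of_complex
  have h2 : (fun y : ℝ => (Complex.Gamma (y:ℂ)).re) = Real.Gamma := by
    funext y; rw [Complex.Gamma_ofReal, Complex.ofReal_re]
  rw [h2] at h1
  exact h1.deriv

lemma derivCGamma_diff {x : ℝ} (hx : 0 < x) :
    DifferentiableAt ℂ (deriv Complex.Gamma) (x:ℂ) := by
  have hU : IsOpen {z : ℂ | 0 < z.re} := isOpen_lt continuous_const Complex.continuous_re
  have hdiff : DifferentiableOn ℂ Complex.Gamma {z : ℂ | 0 < z.re} := by
    intro z hz
    refine (Complex.differentiableAt_Gamma z fun m => ?_).differentiableWithinAt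
    intro h
    have : z.re = -(m:ℝ) := by rw [h]; simp
    simp only [Set.mem_setOf_eq, this] at hz
    have : (0:ℝ) ≤ (m:ℝ) := Nat.cast_nonneg m
    linarith
  have hA : AnalyticAt ℂ Complex.Gamma (x:ℂ) :=
    hdiff.analyticAt (hU.mem_nhds (by simpa using hx))
  have hF := hA.fderiv.differentiableAt
  have : DifferentiableAt ℂ (fun z => fderiv ℂ Complex.Gamma z 1) (x:ℂ) :=
    hF.clm_apply (differentiableAt_const 1)
  have he : (fun z => fderiv ℂ Complex.Gamma z 1) = deriv Complex.Gamma :=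
    funext fun z => fderiv_apply_one_eq_deriv
  rwa [he] at this

lemma digamma_diff {x : ℝ} (hx : 0 < x) : DifferentiableAt ℝ digamma x := by
  have hΓ := Real.differentiableAt_Gamma (ne_neg_nat hx)
  have hre : DifferentiableAt ℝ (fun y : ℝ => (deriv Complex.Gamma (y:ℂ)).re) x :=
    ((derivCGamma_diff hx).hasDerivAt.real_of_complex).differentiableAt
  have heq : deriv Real.Gamma =ᶠ[nhds x] (fun y : ℝ => (deriv Complex.Gamma (y:ℂ)).re) := by
    filter_upwards [isOpen_Ioi.mem_nhds (Set.mem_Ioi.mpr hx)] with y hy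
    exact derivGamma_eq hy
  have hder : DifferentiableAt ℝ (deriv Real.Gamma) x :=
    heq.differentiableAt_iff.mpr hre
  exact hder.div hΓ (Real.Gamma_pos_of_pos hx).ne'

lemma digamma_hasDerivAt {x : ℝ} (hx : 0 < x) :
    HasDerivAt digamma (trigamma x) x :=
  (digamma_diff hx).hasDerivAt

/-- Var[log(1−Y)] under Beta(a,b) equals ψ₁(b) − ψ₁(a+b). -/

theorem beta_var_log_one_sub (a b : ℝ) (ha : 0 < a) (hb : 0 < b) :
    ∫ y in Set.Ioo (0:ℝ) 1,
      (Real.log (1 - y) - (digamma b - digamma (a + b))) ^ 2 * betaDensity a b y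
      = trigamma b - trigamma (a + b) := by
  set m := digamma b - digamma (a + b) with hm
  set v := trigamma b - trigamma (a + b) with hv
  set H : ℝ → ℝ := fun t => Real.Gamma a * Real.Gamma t / Real.Gamma (a+t) with hHdef
  set I : ℕ → ℝ → ℝ := fun n t =>
    ∫ y in Ioo (0:ℝ) 1, (Real.log (1-y))^n * (y ^ (a-1) * (1-y) ^ (t-1)) with hIdef
  have hab : 0 < a + b := by linarith
  have hHpos : ∀ t, 0 < t → 0 < H t := fun t ht =>
    div_pos (mul_pos (Real.Gamma_pos_of_pos ha) (Real.Gamma_pos_of_pos ht))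
      (Real.Gamma_pos_of_pos (by linarith))
  -- derivative of H
  have hH : ∀ t, 0 < t → HasDerivAt H (H t * (digamma t - digamma (a+t))) t := by
    intro t ht
    have hat : 0 < a + t := by linarith
    have h1 := (Gamma_hasDerivAt ht).const_mul (Real.Gamma a)
    have h2 : HasDerivAt (fun t => Real.Gamma (a+t))
        (digamma (a+t) * Real.Gamma (a+t)) t := by
      have := (Gamma_hasDerivAt hat).comp t ((hasDerivAt_id t).const_add a)
      simpa [Function.comp_def] using this
    have h3 := h1.div h2 (Real.Gamma_pos_of_pos hat).ne'
    refine h3.congr_deriv ?_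
    have hGt : Real.Gamma (a+t) ≠ 0 := (Real.Gamma_pos_of_pos hat).ne'
    simp only [hHdef]
    field_simp
  -- I 0 = H on positives
  have hI0 : ∀ t, 0 < t → I 0 t = H t := by
    intro t ht
    rw [hIdef]
    simp only [pow_zero, one_mul]
    exact w_integral a t ha ht
  -- I 1 via uniqueness of derivatives
  have hI1 : ∀ t, 0 < t → I 1 t = H t * (digamma t - digamma (a+t)) := by
    intro t ht
    have hd : HasDerivAt (I 0) (I 1 t) t := key_deriv ha ht 0
    have heq : I 0 =ᶠ[nhds t] H := by
      filter_upwards [isOpen_Ioi.mem_nhds (Set.mem_Ioi.mpr ht)] with s hs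
      exact hI0 s hs
    have hd' : HasDerivAt H (I 1 t) t := hd.congr_of_eventuallyEq heq.symm
    exact hd'.unique (hH t ht)
  -- I 2 at b via uniqueness
  have hI2 : I 2 b = H b * m * m + H b * v := by
    have hd : HasDerivAt (I 1) (I 2 b) b := key_deriv ha hb 1
    have heq : I 1 =ᶠ[nhds b] (fun t => H t * (digamma t - digamma (a+t))) := by
      filter_upwards [isOpen_Ioi.mem_nhds (Set.mem_Ioi.mpr hb)] with s hs
      exact hI1 s hs
    have hd' : HasDerivAt (fun t => H t * (digamma t - digamma (a+t))) (I 2 b) b :=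
      hd.congr_of_eventuallyEq heq.symm
    have hcomp : HasDerivAt (fun t => digamma (a+t)) (trigamma (a+b)) b := by
      have := (digamma_hasDerivAt hab).comp b ((hasDerivAt_id b).const_add a)
      simpa [Function.comp_def] using this
    have hK : HasDerivAt (fun t => H t * (digamma t - digamma (a+t)))
        ((H b * (digamma b - digamma (a+b))) * (digamma b - digamma (a+b))
          + H b * (trigamma b - trigamma (a+b))) b :=
      (hH b hb).mul ((digamma_hasDerivAt hb).sub hcomp)
    have := hd'.unique hK
    rw [this, ← hm, ← hv]
  -- final computation
  set C := Real.Gamma a * Real.Gamma b / Real.Gamma (a + b) with hC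
  have hCpos : 0 < C := hHpos b hb
  have hfe : ∀ y : ℝ, (Real.log (1 - y) - m) ^ 2 * betaDensity a b y
      = ((Real.log (1-y))^2 * (y ^ (a-1) * (1-y) ^ (b-1))
         - (2*m) * ((Real.log (1-y))^1 * (y ^ (a-1) * (1-y) ^ (b-1)))
         + m^2 * ((Real.log (1-y))^0 * (y ^ (a-1) * (1-y) ^ (b-1)))) / C := by
    intro y
    rw [betaDensity, ← hC]
    ring
  simp only [hfe]
  rw [integral_div]
  have h2 := int_logpow ha hb 2
  have h1 := (int_logpow ha hb 1).const_mul (2*m)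
  have h0 := (int_logpow ha hb 0).const_mul (m^2)
  have hsubint : Integrable (fun y : ℝ =>
      (Real.log (1-y))^2 * (y ^ (a-1) * (1-y) ^ (b-1))
        - 2*m * ((Real.log (1-y))^1 * (y ^ (a-1) * (1-y) ^ (b-1))))
      (volume.restrict (Ioo (0:ℝ) 1)) := h2.sub h1
  rw [integral_add hsubint h0, integral_sub h2 h1, integral_const_mul, integral_const_mul]
  have e2 : (∫ y in Ioo (0:ℝ) 1, (Real.log (1-y))^2 * (y ^ (a-1) * (1-y) ^ (b-1))) = I 2 b := rfl
  have e1 : (∫ y in Ioo (0:ℝ) 1, (Real.log (1-y))^1 * (y ^ (a-1) * (1-y) ^ (b-1))) = I 1 b := rfl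
  have e0 : (∫ y in Ioo (0:ℝ) 1, (Real.log (1-y))^0 * (y ^ (a-1) * (1-y) ^ (b-1))) = I 0 b := rfl
  rw [e2, e1, e0, hI2, hI1 b hb, hI0 b hb, ← hm]
  have hHb : H b = C := rfl
  rw [hHb]
  field_simp
  ring
end

section
/- For every μ ∈ (0,1) and ν > 0, the expected ν-score of the mean-precision beta log-likelihood vanishes: ∫₀¹ [ μ·(log(y/(1−y)) − ψ(νμ) + ψ(ν(1−μ))) + log(1−y) − ψ(ν(1−μ)) + ψ(ν) ] · f(y; μ, ν) dy = 0, where f(·; μ, ν) is the Beta(νμ, ν(1−μ)) density. -/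
open MeasureTheory Real Set

-- Lemma A: integrability of the beta integrand on Ioo 0 1
lemma betaInt (a b : ℝ) (ha : 0 < a) (hb : 0 < b) :
    IntegrableOn (fun y : ℝ => y ^ (a - 1) * (1 - y) ^ (b - 1)) (Ioo 0 1) := by
  have h := Complex.betaIntegral_convergent (u := (a:ℂ)) (v := (b:ℂ)) (by simpa using ha) (by simpa using hb)
  have h2 : IntegrableOn (fun x : ℝ => (x:ℂ) ^ ((a:ℂ) - 1) * (1 - (x:ℂ)) ^ ((b:ℂ) - 1)) (Ioc 0 1) := by
    simpa [intervalIntegrable_iff_integrableOn_Ioc_of_le] using h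
  have h3 := IntegrableOn.mono_set (f := fun x : ℝ => ‖(x:ℂ) ^ ((a:ℂ) - 1) * (1 - (x:ℂ)) ^ ((b:ℂ) - 1)‖) (s := Ioo 0 1) (t := Ioc 0 1) h2.norm Ioo_subset_Ioc_self
  refine h3.congr_fun ?_ measurableSet_Ioo
  intro y hy
  obtain ⟨hy0, hy1⟩ := hy
  have e1 : (y:ℂ) ^ ((a:ℂ) - 1) = ((y ^ (a-1) : ℝ) : ℂ) := by
    rw [show ((a:ℂ) - 1) = ((a - 1 : ℝ):ℂ) by push_cast; ring, ← Complex.ofReal_cpow hy0.le]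
  have e2 : (1 - (y:ℂ)) ^ ((b:ℂ) - 1) = (((1 - y) ^ (b-1) : ℝ) : ℂ) := by
    rw [show (1 - (y:ℂ)) = (((1 - y : ℝ)):ℂ) by push_cast; ring,
      show ((b:ℂ) - 1) = ((b - 1 : ℝ):ℂ) by push_cast; ring, ← Complex.ofReal_cpow (by linarith : (0:ℝ) ≤ 1 - y)]
  simp only [e1, e2, ← Complex.ofReal_mul, Complex.norm_real, Real.norm_eq_abs]
  exact abs_of_nonneg (mul_nonneg (Real.rpow_nonneg hy0.le _) (Real.rpow_nonneg (by linarith) _))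

-- Lemma B: the value of the beta integral
lemma betaVal (a b : ℝ) (ha : 0 < a) (hb : 0 < b) :
    ∫ y in Ioo (0:ℝ) 1, y ^ (a-1) * (1-y) ^ (b-1)
      = Real.Gamma a * Real.Gamma b / Real.Gamma (a+b) := by
  have key := Complex.Gamma_mul_Gamma_eq_betaIntegral (s := (a:ℂ)) (t := (b:ℂ))
    (by simpa using ha) (by simpa using hb)
  have hBeta : Complex.betaIntegral a b
      = ((∫ y in Ioo (0:ℝ) 1, y ^ (a-1) * (1-y) ^ (b-1) : ℝ) : ℂ) := by
    rw [Complex.betaIntegral, intervalIntegral.integral_of_le zero_le_one,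
      MeasureTheory.integral_Ioc_eq_integral_Ioo]
    refine Eq.trans (setIntegral_congr_fun measurableSet_Ioo ?_) integral_ofReal
    intro y hy
    obtain ⟨hy0, hy1⟩ := hy
    have e1 : (y:ℂ) ^ ((a:ℂ) - 1) = ((y ^ (a-1) : ℝ) : ℂ) := by
      rw [show ((a:ℂ) - 1) = ((a - 1 : ℝ):ℂ) by push_cast; ring, ← Complex.ofReal_cpow hy0.le]
    have e2 : (1 - (y:ℂ)) ^ ((b:ℂ) - 1) = (((1 - y) ^ (b-1) : ℝ) : ℂ) := by
      rw [show (1 - (y:ℂ)) = (((1 - y : ℝ)):ℂ) by push_cast; ring,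
        show ((b:ℂ) - 1) = ((b - 1 : ℝ):ℂ) by push_cast; ring,
        ← Complex.ofReal_cpow (by linarith : (0:ℝ) ≤ 1 - y)]
    show (y:ℂ) ^ ((a:ℂ) - 1) * (1 - (y:ℂ)) ^ ((b:ℂ) - 1) = ((y ^ (a-1) * (1-y) ^ (b-1) : ℝ) : ℂ)
    rw [e1, e2, ← Complex.ofReal_mul]
  rw [hBeta, show ((a:ℂ) + (b:ℂ)) = ((a + b : ℝ) : ℂ) by push_cast; ring,
    Complex.Gamma_ofReal, Complex.Gamma_ofReal, Complex.Gamma_ofReal,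
    ← Complex.ofReal_mul, ← Complex.ofReal_mul] at key
  have := Complex.ofReal_injective key
  have hG : Real.Gamma (a+b) ≠ 0 := (Real.Gamma_pos_of_pos (by linarith)).ne'
  field_simp
  linarith [this]

-- Lemma C: integrability with |log|
lemma betaLogInt (a b : ℝ) (ha : 0 < a) (hb : 0 < b) :
    IntegrableOn (fun y : ℝ => |Real.log y| * (y ^ (a-1) * (1-y) ^ (b-1))) (Ioo 0 1) := by
  have base := (betaInt (a/2) b (by linarith) hb).const_mul (2/a)
  refine base.mono' ?_ ?_
  · refine ContinuousOn.aestronglyMeasurable ?_ measurableSet_Ioo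
    refine ContinuousOn.mul ?_ (ContinuousOn.mul ?_ ?_)
    · exact (Real.continuousOn_log.mono (fun x hx => hx.1.ne')).abs
    · exact continuousOn_id.rpow_const (fun x hx => Or.inl hx.1.ne')
    · exact (continuousOn_const.sub continuousOn_id).rpow_const
        (fun x hx => Or.inl (by simp only [Pi.sub_apply, id]; intro h; linarith [hx.2, sub_eq_zero.mp h]))
  · rw [ae_restrict_iff' measurableSet_Ioo]
    refine Filter.Eventually.of_forall (fun y hy => ?_)
    obtain ⟨hy0, hy1⟩ := hy
    have h1y : (0:ℝ) < 1 - y := by linarith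
    have hlog : |Real.log y| ≤ (2/a) * y ^ (-(a/2)) := by
      rw [abs_of_nonpos (Real.log_nonpos hy0.le hy1.le), ← Real.log_inv]
      have := Real.log_le_rpow_div (x := y⁻¹) (ε := a/2) (by positivity) (by linarith)
      calc Real.log y⁻¹ ≤ (y⁻¹) ^ (a/2) / (a/2) := this
        _ = (2/a) * y ^ (-(a/2)) := by
            rw [Real.inv_rpow hy0.le, ← Real.rpow_neg hy0.le, div_eq_mul_inv, mul_comm, inv_div]
    have hnn : (0:ℝ) ≤ y ^ (a-1) * (1-y) ^ (b-1) :=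
      mul_nonneg (Real.rpow_nonneg hy0.le _) (Real.rpow_nonneg h1y.le _)
    rw [Real.norm_eq_abs, abs_of_nonneg (mul_nonneg (abs_nonneg _) hnn)]
    calc |Real.log y| * (y ^ (a-1) * (1-y) ^ (b-1))
        ≤ (2/a) * y ^ (-(a/2)) * (y ^ (a-1) * (1-y) ^ (b-1)) :=
          mul_le_mul_of_nonneg_right hlog hnn
      _ = 2/a * (y ^ (a/2-1) * (1-y) ^ (b-1)) := by
          rw [mul_assoc, ← mul_assoc (y ^ (-(a/2))), ← Real.rpow_add hy0]
          ring_nf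

lemma betaLogVal (a b : ℝ) (ha : 0 < a) (hb : 0 < b) :
    ∫ y in Ioo (0:ℝ) 1, Real.log y * (y ^ (a-1) * (1-y) ^ (b-1))
      = (Real.Gamma a * Real.Gamma b / Real.Gamma (a+b)) * (digamma a - digamma (a+b)) := by
  have hmeas : ∀ x : ℝ, AEStronglyMeasurable (fun y : ℝ => y ^ (x-1) * (1-y) ^ (b-1))
      (volume.restrict (Ioo (0:ℝ) 1)) := by
    intro x
    refine ContinuousOn.aestronglyMeasurable ?_ measurableSet_Ioo
    refine ContinuousOn.mul ?_ ?_
    · exact continuousOn_id.rpow_const (fun z hz => Or.inl hz.1.ne')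
    · exact (continuousOn_const.sub continuousOn_id).rpow_const
        (fun z hz => Or.inl (by simp only [Pi.sub_apply, id]; intro h; linarith [hz.2, sub_eq_zero.mp h]))
  have key := hasDerivAt_integral_of_dominated_loc_of_deriv_le
    (μ := volume.restrict (Ioo (0:ℝ) 1))
    (F := fun x y => y ^ (x-1) * (1-y) ^ (b-1))
    (F' := fun x y => Real.log y * (y ^ (x-1) * (1-y) ^ (b-1)))
    (x₀ := a) (s := Metric.ball a (a/2))
    (bound := fun y => |Real.log y| * (y ^ (a/2-1) * (1-y) ^ (b-1)))
    (Metric.ball_mem_nhds a (by positivity))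
    (Filter.Eventually.of_forall (fun x => hmeas x))
    (betaInt a b ha hb)
    (((Real.measurable_log).aestronglyMeasurable).mul (hmeas a))
    ?_ (betaLogInt (a/2) b (by linarith) hb) ?_
  · -- conclude
    obtain ⟨-, hderiv⟩ := key
    have hΓpos : ∀ x : ℝ, 0 < x → Real.Gamma x ≠ 0 := fun x hx => (Real.Gamma_pos_of_pos hx).ne'
    have hdiff : ∀ x : ℝ, 0 < x → HasDerivAt Real.Gamma (deriv Real.Gamma x) x := by
      intro x hx
      refine (Real.differentiableAt_Gamma ?_).hasDerivAt
      intro m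
      have : (0:ℝ) ≤ m := m.cast_nonneg
      intro h; rw [h] at hx; linarith
    have hG : HasDerivAt (fun x : ℝ => Real.Gamma x * Real.Gamma b / Real.Gamma (x+b))
        ((deriv Real.Gamma a * Real.Gamma b * Real.Gamma (a+b)
          - Real.Gamma a * Real.Gamma b * deriv Real.Gamma (a+b)) / (Real.Gamma (a+b))^2) a := by
      have h1 : HasDerivAt (fun x : ℝ => Real.Gamma x * Real.Gamma b)
          (deriv Real.Gamma a * Real.Gamma b) a := (hdiff a ha).mul_const _
      have h2 : HasDerivAt (fun x : ℝ => Real.Gamma (x+b)) (deriv Real.Gamma (a+b)) a := by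
        simpa [Function.comp_def] using (hdiff (a+b) (by linarith)).comp a ((hasDerivAt_id a).add_const b)
      simpa [Pi.div_def] using h1.div h2 (hΓpos _ (by linarith))
    have hEq : (fun x : ℝ => ∫ y in Ioo (0:ℝ) 1, y ^ (x-1) * (1-y) ^ (b-1))
        =ᶠ[nhds a] (fun x : ℝ => Real.Gamma x * Real.Gamma b / Real.Gamma (x+b)) := by
      filter_upwards [eventually_gt_nhds ha] with x hx
      rw [betaVal x b hx hb]
    have hderiv2 : HasDerivAt (fun x : ℝ => ∫ y in Ioo (0:ℝ) 1, y ^ (x-1) * (1-y) ^ (b-1))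
        ((deriv Real.Gamma a * Real.Gamma b * Real.Gamma (a+b)
          - Real.Gamma a * Real.Gamma b * deriv Real.Gamma (a+b)) / (Real.Gamma (a+b))^2) a :=
      hG.congr_of_eventuallyEq hEq
    have huniq := hderiv.unique hderiv2
    rw [huniq]
    have hA := hΓpos a ha
    have hAB := hΓpos (a+b) (by linarith)
    rw [digamma, digamma]
    field_simp
  · -- bound
    rw [ae_restrict_iff' measurableSet_Ioo]
    refine Filter.Eventually.of_forall (fun y hy => ?_)
    obtain ⟨hy0, hy1⟩ := hy
    intro x hx
    rw [Metric.mem_ball, Real.dist_eq, abs_lt] at hx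
    have h1y : (0:ℝ) < 1 - y := by linarith
    have hle : y ^ (x-1) ≤ y ^ (a/2-1) :=
      Real.rpow_le_rpow_of_exponent_ge hy0 hy1.le (by linarith [hx.1])
    rw [Real.norm_eq_abs, abs_mul, abs_mul]
    rw [abs_of_nonneg (Real.rpow_nonneg hy0.le _), abs_of_nonneg (Real.rpow_nonneg h1y.le _)]
    have : |Real.log y| * y ^ (x-1) ≤ |Real.log y| * y ^ (a/2-1) :=
      mul_le_mul_of_nonneg_left hle (abs_nonneg _)
    calc |Real.log y| * (y ^ (x-1) * (1-y) ^ (b-1))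
        = |Real.log y| * y ^ (x-1) * (1-y) ^ (b-1) := by ring
      _ ≤ |Real.log y| * y ^ (a/2-1) * (1-y) ^ (b-1) :=
          mul_le_mul_of_nonneg_right this (Real.rpow_nonneg h1y.le _)
      _ = |Real.log y| * (y ^ (a/2-1) * (1-y) ^ (b-1)) := by ring
  · -- differentiability
    rw [ae_restrict_iff' measurableSet_Ioo]
    refine Filter.Eventually.of_forall (fun y hy => ?_)
    obtain ⟨hy0, hy1⟩ := hy
    intro x _
    have hexp : ∀ z : ℝ, y ^ (z-1) = Real.exp ((z-1) * Real.log y) := fun z => by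
      rw [Real.rpow_def_of_pos hy0, mul_comm]
    have h1 : HasDerivAt (fun z : ℝ => Real.exp ((z-1) * Real.log y))
        (Real.exp ((x-1) * Real.log y) * Real.log y) x := by
      simpa using (((hasDerivAt_id x).sub_const 1).mul_const (Real.log y)).exp
    have h2 : HasDerivAt (fun z : ℝ => y ^ (z-1))
        (Real.exp ((x-1) * Real.log y) * Real.log y) x := by
      simp only [hexp]; exact h1
    have h3 := h2.mul_const ((1-y) ^ (b-1))
    refine h3.congr_deriv ?_
    rw [← hexp]
    ring

lemma betaLog1mVal (a b : ℝ) (ha : 0 < a) (hb : 0 < b) :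
    ∫ y in Ioo (0:ℝ) 1, Real.log (1-y) * (y ^ (a-1) * (1-y) ^ (b-1))
      = (Real.Gamma a * Real.Gamma b / Real.Gamma (a+b)) * (digamma b - digamma (a+b)) := by
  have h1 : ∫ y in Ioo (0:ℝ) 1, Real.log (1-y) * (y ^ (a-1) * (1-y) ^ (b-1))
      = ∫ y in (0:ℝ)..1, Real.log (1-y) * (y ^ (a-1) * (1-y) ^ (b-1)) := by
    rw [intervalIntegral.integral_of_le zero_le_one, MeasureTheory.integral_Ioc_eq_integral_Ioo]
  have h2 : (∫ y in (0:ℝ)..1, Real.log (1-y) * (y ^ (a-1) * (1-y) ^ (b-1)))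
      = ∫ y in (0:ℝ)..1, Real.log y * (y ^ (b-1) * (1-y) ^ (a-1)) := by
    have := intervalIntegral.integral_comp_sub_left
      (fun y => Real.log y * (y ^ (b-1) * (1-y) ^ (a-1))) 1 (a := 0) (b := 1)
    simp only [sub_zero, sub_self] at this
    rw [← this]
    refine intervalIntegral.integral_congr (fun y _ => ?_)
    rw [sub_sub_cancel]
    ring
  have h3 : (∫ y in (0:ℝ)..1, Real.log y * (y ^ (b-1) * (1-y) ^ (a-1)))
      = ∫ y in Ioo (0:ℝ) 1, Real.log y * (y ^ (b-1) * (1-y) ^ (a-1)) := by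
    rw [intervalIntegral.integral_of_le zero_le_one, MeasureTheory.integral_Ioc_eq_integral_Ioo]
  rw [h1, h2, h3, betaLogVal b a hb ha, add_comm b a]
  ring

lemma betaLogIntOn (a b : ℝ) (ha : 0 < a) (hb : 0 < b) :
    IntegrableOn (fun y : ℝ => Real.log y * (y ^ (a-1) * (1-y) ^ (b-1))) (Ioo 0 1) := by
  refine (betaLogInt a b ha hb).mono' ?_ ?_
  · refine ContinuousOn.aestronglyMeasurable ?_ measurableSet_Ioo
    refine ContinuousOn.mul (Real.continuousOn_log.mono (fun x hx => hx.1.ne')) ?_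
    refine ContinuousOn.mul ?_ ?_
    · exact continuousOn_id.rpow_const (fun z hz => Or.inl hz.1.ne')
    · exact (continuousOn_const.sub continuousOn_id).rpow_const
        (fun z hz => Or.inl (by simp only [Pi.sub_apply, id]; intro h; linarith [hz.2, sub_eq_zero.mp h]))
  · rw [ae_restrict_iff' measurableSet_Ioo]
    refine Filter.Eventually.of_forall (fun y hy => ?_)
    obtain ⟨hy0, hy1⟩ := hy
    have h1y : (0:ℝ) < 1 - y := by linarith
    rw [Real.norm_eq_abs, abs_mul]
    rw [abs_of_nonneg (mul_nonneg (Real.rpow_nonneg hy0.le _) (Real.rpow_nonneg h1y.le _))]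

lemma betaLog1mIntOn (a b : ℝ) (ha : 0 < a) (hb : 0 < b) :
    IntegrableOn (fun y : ℝ => Real.log (1-y) * (y ^ (a-1) * (1-y) ^ (b-1))) (Ioo 0 1) := by
  have key : IntervalIntegrable (fun y : ℝ => Real.log y * (y ^ (b-1) * (1-y) ^ (a-1)))
      volume 0 1 := by
    rw [intervalIntegrable_iff_integrableOn_Ioc_of_le zero_le_one]
    exact (betaLogIntOn b a hb ha).congr_set_ae Ioo_ae_eq_Ioc.symm
  have key2 := key.comp_sub_left 1
  simp only [sub_zero, sub_self] at key2
  have key3 : IntervalIntegrable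
      (fun y : ℝ => Real.log (1-y) * (y ^ (a-1) * (1-y) ^ (b-1))) volume 0 1 := by
    refine (key2.symm).congr ?_
    intro y _
    beta_reduce
    rw [sub_sub_cancel]
    ring
  rw [intervalIntegrable_iff_integrableOn_Ioc_of_le zero_le_one] at key3
  exact key3.congr_set_ae Ioo_ae_eq_Ioc


/-- the expected ν-score of the mean-precision beta log-likelihood vanishes. -/
theorem expected_nu_score_eq_zero (μ ν : ℝ) (hμ : μ ∈ Set.Ioo (0:ℝ) 1) (hν : 0 < ν) :
    ∫ y in Set.Ioo (0:ℝ) 1,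
      (μ * (Real.log (y / (1 - y)) - digamma (ν * μ) + digamma (ν * (1 - μ)))
          + Real.log (1 - y) - digamma (ν * (1 - μ)) + digamma ν) *
        (Real.Gamma ν / (Real.Gamma (ν * μ) * Real.Gamma (ν * (1 - μ))) *
          y ^ (ν * μ - 1) * (1 - y) ^ (ν * (1 - μ) - 1)) = 0 := by
  obtain ⟨hμ0, hμ1⟩ := hμ
  set a := ν * μ with ha_def
  set b := ν * (1 - μ) with hb_def
  have ha : 0 < a := by positivity
  have hb : 0 < b := mul_pos hν (by linarith)
  have hab : a + b = ν := by rw [ha_def, hb_def]; ring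
  set c := Real.Gamma ν / (Real.Gamma a * Real.Gamma b) with hc_def
  set C := digamma ν - μ * digamma a - (1 - μ) * digamma b with hC_def
  have hcongr : ∀ y ∈ Ioo (0:ℝ) 1,
      (μ * (Real.log (y / (1 - y)) - digamma a + digamma b)
          + Real.log (1 - y) - digamma b + digamma ν) *
        (c * y ^ (a - 1) * (1 - y) ^ (b - 1))
      = c * (μ * (Real.log y * (y ^ (a-1) * (1-y) ^ (b-1)))
          + ((1 - μ) * (Real.log (1-y) * (y ^ (a-1) * (1-y) ^ (b-1)))
            + C * (y ^ (a-1) * (1-y) ^ (b-1)))) := by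
    intro y hy
    obtain ⟨hy0, hy1⟩ := hy
    rw [Real.log_div hy0.ne' (by linarith : (1:ℝ) - y ≠ 0), hC_def]
    ring
  rw [setIntegral_congr_fun measurableSet_Ioo hcongr, integral_const_mul]
  have I1 := (betaLogIntOn a b ha hb).const_mul μ
  have I2 := (betaLog1mIntOn a b ha hb).const_mul (1 - μ)
  have I3 := (betaInt a b ha hb).const_mul C
  rw [integral_add (f := fun y : ℝ => μ * (Real.log y * (y ^ (a-1) * (1-y) ^ (b-1))))
      (g := fun y : ℝ => (1 - μ) * (Real.log (1-y) * (y ^ (a-1) * (1-y) ^ (b-1)))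
        + C * (y ^ (a-1) * (1-y) ^ (b-1))) I1 (I2.add I3),
    integral_add (f := fun y : ℝ => (1 - μ) * (Real.log (1-y) * (y ^ (a-1) * (1-y) ^ (b-1))))
      (g := fun y : ℝ => C * (y ^ (a-1) * (1-y) ^ (b-1))) I2 I3,
    integral_const_mul, integral_const_mul, integral_const_mul,
    betaLogVal a b ha hb, betaLog1mVal a b ha hb, betaVal a b ha hb, hab, hC_def]
  ring
end
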